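/- Let xs < xt be integers, C ≥ 0 a real number, and f : ℤ → ℝ a function satisfying the Ameso(C) condition on [xs,xt]. Suppose there exist x' ∈ [xs,xt] and z ∈ [xs,xt] with x' < z ≤ xt such that f(z) − f(x') ≥ C. Then min over y ∈ [xs, z] of f(y) equals min over y ∈ [xs, xt] of f(y). -/
import Mathlib


/-- Ceiling of `(x+y)/2` as a rational. -/
def mceil (x y : ℤ) : ℤ := ⌈((x : ℚ) + (y : ℚ)) / 2⌉

/-- Floor of `(x+y)/2` as a rational. -/
def mfloor (x y : ℤ) : ℤ := ⌊((x : ℚ) + (y : ℚ)) / 2⌋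

lemma mfloor_pair (u v b : ℤ) (h : u + v = 2 * b) : mfloor u v = b := by
  unfold mfloor
  have h2 : ((u : ℚ) + (v : ℚ)) / 2 = (b : ℚ) := by
    have : ((u : ℚ) + (v : ℚ)) = ((2 * b : ℤ) : ℚ) := by exact_mod_cast congrArg (fun t : ℤ => (t : ℚ)) h
    rw [this]; push_cast; ring
  rw [h2, Int.floor_intCast]

lemma mceil_pair (u v b : ℤ) (h : u + v = 2 * b) : mceil u v = b := by
  unfold mceil
  have h2 : ((u : ℚ) + (v : ℚ)) / 2 = (b : ℚ) := by
    have : ((u : ℚ) + (v : ℚ)) = ((2 * b : ℤ) : ℚ) := by exact_mod_cast congrArg (fun t : ℤ => (t : ℚ)) h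
    rw [this]; push_cast; ring
  rw [h2, Int.ceil_intCast]

/-- Chord bound: an Ameso(C) function lies below every chord plus `C`. -/
lemma ameso_chord (xs xt : ℤ) (C : ℝ) (hC : 0 ≤ C) (f : ℤ → ℝ)
    (hAmeso : ∀ x ∈ Finset.Icc xs xt, ∀ y ∈ Finset.Icc xs xt,
      f x + f y + C ≥ f (mceil x y) + f (mfloor x y))
    (a c : ℤ) (hxa : xs ≤ a) (hcx : c ≤ xt) (hac : a < c) :
    ∀ b ∈ Finset.Icc a c,
      ((c : ℝ) - a) * f b ≤ ((c : ℝ) - b) * f a + ((b : ℝ) - a) * f c + ((c : ℝ) - a) * C := by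
  set P : ℤ → ℝ := fun v => ((c : ℝ) - a) * f v - ((c : ℝ) - v) * f a - ((v : ℝ) - a) * f c
    with hPdef
  obtain ⟨b', hb'mem, hmax⟩ := Finset.exists_max_image (Finset.Icc a c) P
    ⟨a, Finset.mem_Icc.2 ⟨le_refl a, hac.le⟩⟩
  obtain ⟨hab', hb'c⟩ := Finset.mem_Icc.1 hb'mem
  have hca : (0 : ℝ) ≤ (c : ℝ) - a := by
    have : (a : ℝ) ≤ (c : ℝ) := by exact_mod_cast hac.le
    linarith
  -- key: P b' ≤ (c - a) * C
  have hkey : P b' ≤ ((c : ℝ) - a) * C := by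
    rcases le_or_gt (2 * b') (a + c) with hcase | hcase
    · -- reflect a through b' : pair (a, 2b'-a)
      have hmem1 : a ∈ Finset.Icc xs xt := Finset.mem_Icc.2 ⟨hxa, by omega⟩
      have hmem2 : (2 * b' - a) ∈ Finset.Icc xs xt := Finset.mem_Icc.2 ⟨by omega, by omega⟩
      have hA := hAmeso a hmem1 (2 * b' - a) hmem2
      rw [mceil_pair a (2 * b' - a) b' (by ring), mfloor_pair a (2 * b' - a) b' (by ring)] at hA
      have hPu : P (2 * b' - a) ≤ P b' := hmax _ (Finset.mem_Icc.2 ⟨by omega, by omega⟩)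
      have hprod : 0 ≤ ((c : ℝ) - a) * (f a + f (2 * b' - a) + C - (f b' + f b')) :=
        mul_nonneg hca (by linarith)
      have hcast : ((2 * b' - a : ℤ) : ℝ) = 2 * (b' : ℝ) - (a : ℝ) := by push_cast; ring
      simp only [hPdef] at hPu ⊢
      rw [hcast] at hPu
      nlinarith [hprod, hPu]
    · -- reflect c through b' : pair (2b'-c, c)
      have hmem1 : (2 * b' - c) ∈ Finset.Icc xs xt := Finset.mem_Icc.2 ⟨by omega, by omega⟩
      have hmem2 : c ∈ Finset.Icc xs xt := Finset.mem_Icc.2 ⟨by omega, hcx⟩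
      have hA := hAmeso (2 * b' - c) hmem1 c hmem2
      rw [mceil_pair (2 * b' - c) c b' (by ring), mfloor_pair (2 * b' - c) c b' (by ring)] at hA
      have hPu : P (2 * b' - c) ≤ P b' := hmax _ (Finset.mem_Icc.2 ⟨by omega, by omega⟩)
      have hprod : 0 ≤ ((c : ℝ) - a) * (f (2 * b' - c) + f c + C - (f b' + f b')) :=
        mul_nonneg hca (by linarith)
      have hcast : ((2 * b' - c : ℤ) : ℝ) = 2 * (b' : ℝ) - (c : ℝ) := by push_cast; ring
      simp only [hPdef] at hPu ⊢
      rw [hcast] at hPu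
      nlinarith [hprod, hPu]
  intro b hb
  have hPb : P b ≤ P b' := hmax b hb
  simp only [hPdef] at hPb hkey
  linarith

/-- Corollary 2: if `x' < z` in `[xs, xt]` and `f(z) - f(x') ≥ C`, then the minimum of
`f` over `[xs, z]` equals the minimum over `[xs, xt]`. -/
theorem ameso_restrict_right
    (xs xt : ℤ) (hxst : xs < xt) (C : ℝ) (hC : 0 ≤ C) (f : ℤ → ℝ)
    (hAmeso : ∀ x ∈ Finset.Icc xs xt, ∀ y ∈ Finset.Icc xs xt,
      f x + f y + C ≥ f (mceil x y) + f (mfloor x y))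
    (x' z : ℤ) (hx'l : xs ≤ x') (hx'r : x' ≤ xt) (hx'z : x' < z) (hz : z ≤ xt)
    (hgap : f z - f x' ≥ C) :
    (Finset.Icc xs z).inf' (Finset.nonempty_Icc.2 (by omega)) f
      = (Finset.Icc xs xt).inf' (Finset.nonempty_Icc.2 (by omega)) f := by
  have hsub : Finset.Icc xs z ⊆ Finset.Icc xs xt := by
    intro v hv
    rw [Finset.mem_Icc] at hv ⊢
    omega
  apply le_antisymm
  · -- hard direction
    apply Finset.le_inf'
    intro b hb
    obtain ⟨hbl, hbr⟩ := Finset.mem_Icc.1 hb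
    rcases le_or_gt b z with hbz | hbz
    · exact Finset.inf'_le f (Finset.mem_Icc.2 ⟨hbl, hbz⟩)
    · -- main argument : f x' ≤ f b
      have hchord := ameso_chord xs xt C hC f hAmeso x' b hx'l hbr (by omega) z
        (Finset.mem_Icc.2 ⟨hx'z.le, hbz.le⟩)
      have hfx'fb : f x' ≤ f b := by
        have h1 : (x' : ℝ) < (z : ℝ) := by exact_mod_cast hx'z
        have h2 : (z : ℝ) < (b : ℝ) := by exact_mod_cast hbz
        nlinarith [hchord, hgap, h1, h2]
      calc (Finset.Icc xs z).inf' (Finset.nonempty_Icc.2 (by omega)) f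
          ≤ f x' := Finset.inf'_le f (Finset.mem_Icc.2 ⟨hx'l, hx'z.le⟩)
        _ ≤ f b := hfx'fb
  · -- easy direction: inf over bigger set is smaller
    apply Finset.le_inf'
    intro b hb
    exact Finset.inf'_le f (hsub hb)
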